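/- Let P be a probability vector on a finite set X with positive entries, let ε > 0, and let L : X → ℝ with ‖L‖₂ = 1 (Euclidean norm). Then it is impossible that both L and -L satisfy ((e^{-ε}-1)/ε)·√(P(x)) ≤ L(x) ≤ ((e^{ε}-1)/ε)·√(P(x)) for all x. -/
import Mathlib

theorem not_both_feasible_lip {X : Type*} [Fintype X]
    (P : X → ℝ) (hPpos : ∀ x, 0 < P x) (hPsum : ∑ x, P x = 1)
    (ε : ℝ) (hε : 0 < ε)
    (L : X → ℝ) (hL : Real.sqrt (∑ x, (L x) ^ 2) = 1) :
    ¬ ((∀ x, ((Real.exp (-ε) - 1) / ε) * Real.sqrt (P x) ≤ L x ∧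
              L x ≤ ((Real.exp ε - 1) / ε) * Real.sqrt (P x)) ∧
       (∀ x, ((Real.exp (-ε) - 1) / ε) * Real.sqrt (P x) ≤ -L x ∧
              -L x ≤ ((Real.exp ε - 1) / ε) * Real.sqrt (P x))) := by
  rintro ⟨h1, h2⟩
  set c : ℝ := (1 - Real.exp (-ε)) / ε with hc
  have hcpos : 0 < c := by
    apply div_pos _ hε
    have : Real.exp (-ε) < 1 := Real.exp_lt_one_iff.mpr (by linarith)
    linarith
  have hclt : c < 1 := by
    rw [hc, div_lt_one hε]
    have := Real.add_one_lt_exp (x := -ε) (by linarith)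
    linarith
  -- each |L x| ≤ c * sqrt (P x)
  have hsq : ∀ x, (L x) ^ 2 ≤ c ^ 2 * P x := by
    intro x
    have hs := Real.sq_sqrt (hPpos x).le
    have hlo := (h1 x).1
    have hhi := (h2 x).1
    have hub : L x ≤ c * Real.sqrt (P x) := by
      have : -L x ≥ -(c * Real.sqrt (P x)) := by
        have : ((Real.exp (-ε) - 1) / ε) * Real.sqrt (P x) = -(c * Real.sqrt (P x)) := by
          rw [hc]; ring
        linarith [hhi, this ▸ hhi]
      linarith
    have hlb : -(c * Real.sqrt (P x)) ≤ L x := by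
      have heq : ((Real.exp (-ε) - 1) / ε) * Real.sqrt (P x) = -(c * Real.sqrt (P x)) := by
        rw [hc]; ring
      linarith [heq ▸ hlo]
    have habs : |L x| ≤ c * Real.sqrt (P x) := abs_le.mpr ⟨hlb, hub⟩
    calc (L x) ^ 2 = |L x| ^ 2 := (sq_abs _).symm
      _ ≤ (c * Real.sqrt (P x)) ^ 2 := by
          apply pow_le_pow_left₀ (abs_nonneg _) habs
      _ = c ^ 2 * P x := by rw [mul_pow, hs]
  have hsum : (∑ x, (L x) ^ 2) ≤ c ^ 2 := by
    calc (∑ x, (L x) ^ 2) ≤ ∑ x, c ^ 2 * P x := Finset.sum_le_sum fun x _ => hsq x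
      _ = c ^ 2 * ∑ x, P x := by rw [Finset.mul_sum]
      _ = c ^ 2 := by rw [hPsum, mul_one]
  have hone : (∑ x, (L x) ^ 2) = 1 := by
    have hnn : 0 ≤ ∑ x, (L x) ^ 2 := Finset.sum_nonneg fun x _ => sq_nonneg _
    have := Real.sqrt_eq_one.mp hL
    exact this
  have : c ^ 2 < 1 := by nlinarith
  linarith [hone ▸ hsum]
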